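/- Let D = ℤ × ℤ be the left brace with operations (k₁, k₂) + (t₁, t₂) = (k₁ + t₁, k₂ + t₂) and (k₁, k₂)·(t₁, t₂) = (k₁ + t₁, k₁t₁ + k₂ + t₂). If A is any left brace generated by one element with A³ = ⟨0⟩ = A^{(3)} (where 3 and 3 are the least such integers, i.e. A ∈ 𝒩_S(3,3)), then there exists a surjective brace homomorphism f : D → A (a map that is simultaneously a homomorphism of the additive groups and of the multiplicative groups). -/

import Mathlib

/-- A left brace: `(A, +)` is an abelian group, `(A, *)` is a group, and
`a * (b + c) = a * b + a * c - a` for all `a b c`. -/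
class LeftBrace (A : Type*) extends AddCommGroup A, Group A where
  mul_add_eq : ∀ a b c : A, a * (b + c) = a * b + a * c - a

namespace LeftBrace

variable {A : Type*} [LeftBrace A]

/-- The star operation of a left brace: `a ⋆ b = a * b - a - b`. -/
def star (a b : A) : A := a * b - a - b

/-- `K ⋆ L`: the subgroup of the additive group of `A` generated by all
`x ⋆ y` with `x ∈ K`, `y ∈ L`. -/
def setStar (K L : Set A) : AddSubgroup A :=
  AddSubgroup.closure (Set.image2 star K L)

/-- A subbrace of `A`: a subset that is simultaneously a subgroup of the
additive group of `A` and a subgroup of the multiplicative group of `A`. -/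
def IsSubbrace (S : Set A) : Prop :=
  (0 : A) ∈ S ∧ (∀ x ∈ S, ∀ y ∈ S, x + y ∈ S) ∧ (∀ x ∈ S, -x ∈ S) ∧
    (1 : A) ∈ S ∧ (∀ x ∈ S, ∀ y ∈ S, x * y ∈ S) ∧ (∀ x ∈ S, x⁻¹ ∈ S)

/-- A left ideal of `A`: a subbrace `S` with `a ⋆ b ∈ S` for all `a ∈ A`, `b ∈ S`. -/
def IsLeftIdeal (S : Set A) : Prop :=
  IsSubbrace S ∧ ∀ a : A, ∀ b ∈ S, star a b ∈ S

/-- An ideal of `A`: a subbrace `S` with `a ⋆ z ∈ S` and `z ⋆ a ∈ S`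
for all `a ∈ A`, `z ∈ S`. -/
def IsIdeal (S : Set A) : Prop :=
  IsSubbrace S ∧ ∀ a : A, ∀ z ∈ S, star a z ∈ S ∧ star z a ∈ S

/-- The left series of the brace `A`, with the indexing shifted by one:
`leftSeriesN A 0 = A¹ = A` and `leftSeriesN A n = Aⁿ⁺¹ = A ⋆ Aⁿ`.
In particular `leftSeriesN A 1 = A²` and `leftSeriesN A 2 = A³`. -/
def leftSeriesN (A : Type*) [LeftBrace A] : ℕ → AddSubgroup A
  | 0 => ⊤
  | n + 1 => setStar Set.univ ((leftSeriesN A n : AddSubgroup A) : Set A)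

/-- The right series of the brace `A`, with the indexing shifted by one:
`rightSeriesN A 0 = A⁽¹⁾ = A` and `rightSeriesN A n = A⁽ⁿ⁺¹⁾ = A⁽ⁿ⁾ ⋆ A`.
In particular `rightSeriesN A 2 = A⁽³⁾` and `rightSeriesN A 3 = A⁽⁴⁾`. -/
def rightSeriesN (A : Type*) [LeftBrace A] : ℕ → AddSubgroup A
  | 0 => ⊤
  | n + 1 => setStar ((rightSeriesN A n : AddSubgroup A) : Set A) Set.univ

end LeftBrace

open LeftBrace

/-- The underlying set `D = ℤ × ℤ` (as a type synonym, so that the brace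
multiplication below does not clash with the componentwise product). -/
def TwoBrace : Type := ℤ × ℤ

namespace TwoBrace

/-- The addition of `D` is componentwise: `(k₁,k₂)+(t₁,t₂) = (k₁+t₁, k₂+t₂)`. -/
instance : AddCommGroup TwoBrace := inferInstanceAs (AddCommGroup (ℤ × ℤ))

/-- The multiplication of `D`: `(k₁,k₂)·(t₁,t₂) = (k₁+t₁, k₁t₁+k₂+t₂)`. -/
instance instGroup : Group TwoBrace where
  mul x y := ((x.1 + y.1, x.1 * y.1 + x.2 + y.2) : ℤ × ℤ)
  one := ((0, 0) : ℤ × ℤ)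
  inv x := ((-x.1, x.1 ^ 2 - x.2) : ℤ × ℤ)
  mul_assoc a b c := show
      ((a.1 + b.1 + c.1, (a.1 + b.1) * c.1 + (a.1 * b.1 + a.2 + b.2) + c.2) : ℤ × ℤ)
      = (a.1 + (b.1 + c.1), a.1 * (b.1 + c.1) + a.2 + (b.1 * c.1 + b.2 + c.2)) by
    refine Prod.ext ?_ ?_ <;> dsimp <;> ring
  one_mul a := show ((0 + a.1, 0 * a.1 + 0 + a.2) : ℤ × ℤ) = (a.1, a.2) by
    refine Prod.ext ?_ ?_ <;> dsimp <;> ring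
  mul_one a := show ((a.1 + 0, a.1 * 0 + a.2 + 0) : ℤ × ℤ) = (a.1, a.2) by
    refine Prod.ext ?_ ?_ <;> dsimp <;> ring
  inv_mul_cancel a := show
      ((-a.1 + a.1, -a.1 * a.1 + (a.1 ^ 2 - a.2) + a.2) : ℤ × ℤ) = ((0, 0) : ℤ × ℤ) by
    refine Prod.ext ?_ ?_ <;> dsimp <;> ring

/-- `D` with these two operations is a left brace. -/
instance instLeftBrace : LeftBrace TwoBrace :=
  { (inferInstance : AddCommGroup TwoBrace), (inferInstance : Group TwoBrace) with
    mul_add_eq := fun a b c => show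
        ((a.1 + (b.1 + c.1), a.1 * (b.1 + c.1) + a.2 + (b.2 + c.2)) : ℤ × ℤ)
        = ((a.1 + b.1) + (a.1 + c.1) - a.1,
            (a.1 * b.1 + a.2 + b.2) + (a.1 * c.1 + a.2 + c.2) - a.2) by
      refine Prod.ext ?_ ?_ <;> dsimp <;> ring }

end TwoBrace

section AuxBrace

variable {A : Type*} [LeftBrace A]

lemma brace_mul_zero (a : A) : a * 0 = a := by
  have h := LeftBrace.mul_add_eq a 0 0
  rw [add_zero] at h
  have h2 : a * 0 + a = a * 0 + a * 0 := by nth_rewrite 1 [h]; abel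
  exact (add_left_cancel h2).symm

lemma brace_one_eq_zero : (1 : A) = 0 := by
  have := brace_mul_zero (1 : A)
  rw [one_mul] at this
  exact this.symm

lemma brace_mul_eq (a b : A) : a * b = a + b + star a b := by
  unfold LeftBrace.star; abel

lemma brace_star_add (a b c : A) : star a (b + c) = star a b + star a c := by
  unfold LeftBrace.star; rw [LeftBrace.mul_add_eq]; abel

lemma brace_star_zero (a : A) : star a 0 = 0 := by
  unfold LeftBrace.star; rw [brace_mul_zero]; abel

lemma brace_star_neg (a b : A) : star a (-b) = - star a b := by
  have h := brace_star_add a b (-b)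
  rw [add_neg_cancel, brace_star_zero] at h
  exact eq_neg_of_add_eq_zero_right h.symm

lemma brace_star_zsmul (a : A) (n : ℤ) (b : A) : star a (n • b) = n • star a b := by
  induction n using Int.induction_on with
  | zero => simp [brace_star_zero]
  | succ k ih => rw [add_zsmul, add_zsmul, one_zsmul, one_zsmul, brace_star_add, ih]
  | pred k ih =>
      rw [sub_zsmul, sub_zsmul, one_zsmul, one_zsmul]
      rw [brace_star_add, ih, brace_star_neg]

lemma brace_mul_neg (a b : A) : a * (-b) = a + a - a * b := by
  have h := LeftBrace.mul_add_eq a b (-b)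
  rw [add_neg_cancel, brace_mul_zero] at h
  have h2 := eq_sub_iff_add_eq.mp h
  rw [h2]
  abel

lemma brace_mul_star (a b c : A) : star (a * b) c = star a (star b c) + star b c + star a c := by
  have e1 : b * c - b - c = (b * c + -b) + -c := by abel
  have h1 : a * (b * c - b - c) = a * (b * c) - a * b - a * c + a + a := by
    rw [e1, LeftBrace.mul_add_eq, LeftBrace.mul_add_eq, brace_mul_neg, brace_mul_neg]
    abel
  unfold LeftBrace.star
  rw [mul_assoc, h1]
  abel

lemma brace_zero_star (c : A) : star (0 : A) c = 0 := by
  have h : (0 : A) * c = c := by rw [← brace_one_eq_zero, one_mul]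
  unfold LeftBrace.star
  rw [h]
  abel

section Nilp

variable (hL : ∀ x y z : A, star x (star y z) = 0)
  (hR : ∀ x y z : A, star (star x y) z = 0)
include hL

lemma brace_step (x y c : A) :
    star (x + y) c = star (y + star x⁻¹ y) c + star x c := by
  have hw : x⁻¹ * (x + y) = y + star x⁻¹ y := by
    have h0 : x⁻¹ + x + star x⁻¹ x = 0 := by
      rw [← brace_mul_eq, inv_mul_cancel]; exact brace_one_eq_zero
    rw [brace_mul_eq x⁻¹ (x + y), brace_star_add]
    have : x⁻¹ + (x + y) + (star x⁻¹ x + star x⁻¹ y)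
        = (x⁻¹ + x + star x⁻¹ x) + (y + star x⁻¹ y) := by abel
    rw [this, h0, zero_add]
  have hx : x * (x⁻¹ * (x + y)) = x + y := mul_inv_cancel_left x (x + y)
  conv_lhs => rw [← hx]
  rw [brace_mul_star, hw, hL, zero_add]

include hR in
lemma brace_add_star (x y c : A) :
    star (x + y) c = star x c + star y c := by
  rw [brace_step hL x y c, brace_step hL y (star x⁻¹ y) c, hL, add_zero, hR, zero_add]
  abel

include hR in
lemma brace_neg_star (x c : A) : star (-x) c = - star x c := by
  have h := brace_add_star hL hR x (-x) c
  rw [add_neg_cancel, brace_zero_star] at h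
  exact eq_neg_of_add_eq_zero_right h.symm

include hR in
lemma brace_zsmul_star (n : ℤ) (x c : A) : star (n • x) c = n • star x c := by
  induction n using Int.induction_on with
  | zero => simp [brace_zero_star]
  | succ k ih => rw [add_zsmul, add_zsmul, one_zsmul, one_zsmul, brace_add_star hL hR, ih]
  | pred k ih =>
      rw [sub_zsmul, sub_zsmul, one_zsmul, one_zsmul]
      rw [brace_add_star hL hR, ih, brace_neg_star hL hR]

end Nilp

end AuxBrace

/-- **Theorem B1, second part.** Let `D = ℤ × ℤ` be the left
brace with componentwise addition and multiplication
`(k₁,k₂)·(t₁,t₂) = (k₁+t₁, k₁t₁+k₂+t₂)` (the brace `TwoBrace` above). If `A`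
is any one-generator left brace with `A³ = ⟨0⟩ = A⁽³⁾`, where `3` and `3` are
the least such integers (i.e. `A ∈ 𝒩_S(3,3)`; here `A³ = leftSeriesN A 2`,
`A⁽³⁾ = rightSeriesN A 2`, `A² = leftSeriesN A 1`, `A⁽²⁾ = rightSeriesN A 1`),
then there is a surjective brace homomorphism `f : D → A`, i.e. a surjection
that is a homomorphism for both operations. -/
theorem twoBrace_epimorphism {A : Type*} [LeftBrace A]
    (hgen : ∃ a : A, ∀ S : Set A, IsSubbrace S → a ∈ S → S = Set.univ)
    (hl : leftSeriesN A 2 = ⊥) (hr : rightSeriesN A 2 = ⊥)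
    (hl' : leftSeriesN A 1 ≠ ⊥) (hr' : rightSeriesN A 1 ≠ ⊥) :
    ∃ f : TwoBrace → A, Function.Surjective f ∧
      (∀ x y : TwoBrace, f (x + y) = f x + f y) ∧
      (∀ x y : TwoBrace, f (x * y) = f x * f y) := by
  classical
  obtain ⟨a, ha⟩ := hgen
  -- membership of single stars in the second terms of the series
  have hmemL : ∀ b c : A, star b c ∈ leftSeriesN A 1 := by
    intro b c
    show star b c ∈ setStar Set.univ _
    exact AddSubgroup.subset_closure
      (Set.mem_image2_of_mem (Set.mem_univ b) (by simp [leftSeriesN]))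
  have hmemR : ∀ b c : A, star b c ∈ rightSeriesN A 1 := by
    intro b c
    show star b c ∈ setStar _ Set.univ
    exact AddSubgroup.subset_closure
      (Set.mem_image2_of_mem (by simp [rightSeriesN]) (Set.mem_univ c))
  have hL : ∀ x y z : A, star x (star y z) = 0 := by
    intro x y z
    have hm : star x (star y z) ∈ leftSeriesN A 2 :=
      AddSubgroup.subset_closure
        (Set.mem_image2_of_mem (Set.mem_univ x) (hmemL y z))
    rw [hl] at hm
    exact AddSubgroup.mem_bot.mp hm
  have hR : ∀ x y z : A, star (star x y) z = 0 := by
    intro x y z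
    have hm : star (star x y) z ∈ rightSeriesN A 2 :=
      AddSubgroup.subset_closure
        (Set.mem_image2_of_mem (hmemR x y) (Set.mem_univ z))
    rw [hr] at hm
    exact AddSubgroup.mem_bot.mp hm
  set s : A := star a a with hs
  have hsa : star s a = 0 := hR a a a
  have has : star a s = 0 := hL a a a
  have hss : star s s = 0 := hR a a s
  -- the key bilinearity computation
  have key : ∀ m n m' n' : ℤ,
      star (m • a + n • s) (m' • a + n' • s) = (m * m') • s := by
    intro m n m' n'
    rw [brace_star_add, brace_star_zsmul, brace_star_zsmul,
      brace_add_star hL hR, brace_add_star hL hR,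
      brace_zsmul_star hL hR, brace_zsmul_star hL hR,
      brace_zsmul_star hL hR, brace_zsmul_star hL hR,
      hsa, has, hss, ← hs]
    simp only [smul_zero, add_zero, zero_add, smul_smul]
    rw [mul_comm]
  -- the subbrace of combinations m • a + n • s
  set S : Set A := {x | ∃ m n : ℤ, x = m • a + n • s} with hS
  have haS : a ∈ S := ⟨1, 0, by simp⟩
  have hSsub : IsSubbrace S := by
    refine ⟨⟨0, 0, by simp⟩, ?_, ?_, ⟨0, 0, by simp [brace_one_eq_zero]⟩, ?_, ?_⟩
    · rintro x ⟨m, n, rfl⟩ y ⟨m', n', rfl⟩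
      exact ⟨m + m', n + n', by rw [add_zsmul, add_zsmul]; abel⟩
    · rintro x ⟨m, n, rfl⟩
      exact ⟨-m, -n, by rw [neg_zsmul, neg_zsmul]; abel⟩
    · rintro x ⟨m, n, rfl⟩ y ⟨m', n', rfl⟩
      refine ⟨m + m', n + n' + m * m', ?_⟩
      rw [brace_mul_eq, key, add_zsmul, add_zsmul, add_zsmul]
      abel
    · rintro x ⟨m, n, rfl⟩
      refine ⟨-m, m * m - n, ?_⟩
      have hinv : (m • a + n • s) * ((-m) • a + (m * m - n) • s) = 1 := by
        rw [brace_mul_eq, key, brace_one_eq_zero]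
        simp only [mul_neg, neg_zsmul, sub_zsmul]
        abel
      exact inv_eq_of_mul_eq_one_right hinv
  have hSuniv : S = Set.univ := ha S hSsub haS
  -- the epimorphism
  refine ⟨fun x => x.1 • a + x.2 • s, ?_, ?_, ?_⟩
  · intro b
    have hb : b ∈ S := hSuniv ▸ Set.mem_univ b
    obtain ⟨m, n, rfl⟩ := hb
    exact ⟨((m, n) : ℤ × ℤ), rfl⟩
  · intro x y
    show (x.1 + y.1) • a + (x.2 + y.2) • s = (x.1 • a + x.2 • s) + (y.1 • a + y.2 • s)
    rw [add_zsmul, add_zsmul]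
    abel
  · intro x y
    show (x.1 + y.1) • a + (x.1 * y.1 + x.2 + y.2) • s
      = (x.1 • a + x.2 • s) * (y.1 • a + y.2 • s)
    rw [brace_mul_eq, key, add_zsmul, add_zsmul, add_zsmul]
    abel
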